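/- Fix B > 0, ν_1 > 0, and a channel realization g₂ > 0. The function b ↦ (2^b − 1)/g₂ + ν_1 (2^{B−b} − 1) on the interval [0, B] attains its minimum at the unique point b₂* = min(B, max(0, B/2 + (1/2) log₂(g₂ ν_1))). -/

import Mathlib

/-- For `B > 0`, `ν₁ > 0`, `g₂ > 0`, the function
`b ↦ (2^b − 1)/g₂ + ν₁ (2^{B−b} − 1)` on `[0, B]` attains its minimum at the unique point
`b₂* = min(B, max(0, B/2 + (1/2) log₂(g₂ ν₁)))`. -/
theorem optimal_two_slot_allocation (B ν₁ g₂ : ℝ) (hB : 0 < B) (hν : 0 < ν₁) (hg : 0 < g₂) :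
    let f : ℝ → ℝ := fun b => ((2 : ℝ) ^ b - 1) / g₂ + ν₁ * ((2 : ℝ) ^ (B - b) - 1)
    let bstar : ℝ := min B (max 0 (B / 2 + Real.logb 2 (g₂ * ν₁) / 2))
    bstar ∈ Set.Icc 0 B ∧
      (∀ b ∈ Set.Icc 0 B, f bstar ≤ f b) ∧
      ∀ b ∈ Set.Icc 0 B, b ≠ bstar → f bstar < f b := by
  intro f bstar
  set c : ℝ := B / 2 + Real.logb 2 (g₂ * ν₁) / 2 with hcdef
  have hbs : bstar = min B (max 0 c) := rfl
  have h12 : (1 : ℝ) < 2 := one_lt_two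
  have hlog2 : 0 < Real.log 2 := Real.log_pos h12
  -- derivative of f
  have hd : ∀ x : ℝ, HasDerivAt f
      (Real.log 2 * ((2 : ℝ) ^ x / g₂ - ν₁ * (2 : ℝ) ^ (B - x))) x := by
    intro x
    have h1 : HasDerivAt (fun b : ℝ => (2 : ℝ) ^ b) ((2 : ℝ) ^ x * Real.log 2) x :=
      (Real.hasStrictDerivAt_const_rpow two_pos x).hasDerivAt
    have h2 : HasDerivAt (fun b : ℝ => (2 : ℝ) ^ (B - b))
        (-((2 : ℝ) ^ (B - x) * Real.log 2)) x := by
      have hcomp := ((Real.hasStrictDerivAt_const_rpow two_pos (B - x)).hasDerivAt).comp x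
        ((hasDerivAt_const x B).sub (hasDerivAt_id x))
      exact hcomp.congr_deriv (by ring)
    have := ((h1.sub_const 1).div_const g₂).add ((h2.sub_const 1).const_mul ν₁)
    exact this.congr_deriv (by ring)
  -- key identity: 2^c * 2^c = g₂ * ν₁ * 2^B
  have h2c : (2 : ℝ) ^ c * (2 : ℝ) ^ c = g₂ * ν₁ * (2 : ℝ) ^ B := by
    rw [← Real.rpow_add two_pos]
    have hcc : c + c = Real.logb 2 (g₂ * ν₁) + B := by rw [hcdef]; ring
    rw [hcc, Real.rpow_add two_pos, Real.rpow_logb two_pos (by norm_num) (mul_pos hg hν)]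
  have hrepr : ∀ x : ℝ, ν₁ * (2 : ℝ) ^ (B - x)
      = ((2 : ℝ) ^ c * (2 : ℝ) ^ c) / (g₂ * (2 : ℝ) ^ x) := by
    intro x
    rw [h2c, Real.rpow_sub two_pos]
    have hxpos : (0 : ℝ) < (2 : ℝ) ^ x := Real.rpow_pos_of_pos two_pos x
    field_simp
  have hEpos : ∀ x : ℝ, c < x → 0 < (2 : ℝ) ^ x / g₂ - ν₁ * (2 : ℝ) ^ (B - x) := by
    intro x hx
    have hlt : (2 : ℝ) ^ c < (2 : ℝ) ^ x :=
      (Real.rpow_lt_rpow_left_iff h12).mpr hx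
    have hcpos : (0 : ℝ) < (2 : ℝ) ^ c := Real.rpow_pos_of_pos two_pos c
    have hxpos : (0 : ℝ) < (2 : ℝ) ^ x := Real.rpow_pos_of_pos two_pos x
    rw [hrepr x, sub_pos, div_lt_div_iff₀ (mul_pos hg hxpos) hg]
    nlinarith [mul_lt_mul_of_pos_left hlt hcpos, mul_lt_mul_of_pos_right hlt hxpos,
      mul_pos hcpos hcpos, hg]
  have hEneg : ∀ x : ℝ, x < c → (2 : ℝ) ^ x / g₂ - ν₁ * (2 : ℝ) ^ (B - x) < 0 := by
    intro x hx
    have hlt : (2 : ℝ) ^ x < (2 : ℝ) ^ c :=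
      (Real.rpow_lt_rpow_left_iff h12).mpr hx
    have hcpos : (0 : ℝ) < (2 : ℝ) ^ c := Real.rpow_pos_of_pos two_pos c
    have hxpos : (0 : ℝ) < (2 : ℝ) ^ x := Real.rpow_pos_of_pos two_pos x
    rw [hrepr x, sub_neg, div_lt_div_iff₀ hg (mul_pos hg hxpos)]
    nlinarith [mul_lt_mul_of_pos_left hlt hxpos, mul_lt_mul_of_pos_right hlt hcpos,
      mul_pos hxpos hxpos, hg]
  have hcont : Continuous f := by
    have : Differentiable ℝ f := fun x => (hd x).differentiableAt
    exact this.continuous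
  -- strict monotonicity on [bstar, B]
  have hmono : StrictMonoOn f (Set.Icc bstar B) := by
    apply strictMonoOn_of_deriv_pos (convex_Icc _ _) hcont.continuousOn
    intro x hx
    rw [interior_Icc, Set.mem_Ioo] at hx
    rw [(hd x).deriv]
    have hcx : c < x := by
      rcases le_or_gt c B with h1 | h1
      · have hcb : c ≤ bstar := by
          rw [hbs]; exact le_min h1 (le_max_right 0 c)
        exact lt_of_le_of_lt hcb hx.1
      · exfalso
        have : bstar = B := by
          rw [hbs, min_eq_left]
          exact le_trans h1.le (le_max_right 0 c)
        rw [this] at hx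
        exact absurd (hx.1.trans hx.2) (lt_irrefl B)
    exact mul_pos hlog2 (hEpos x hcx)
  -- strict antitonicity on [0, bstar]
  have hanti : StrictAntiOn f (Set.Icc 0 bstar) := by
    apply strictAntiOn_of_deriv_neg (convex_Icc _ _) hcont.continuousOn
    intro x hx
    rw [interior_Icc, Set.mem_Ioo] at hx
    rw [(hd x).deriv]
    have hcx : x < c := by
      rcases le_or_gt 0 c with h1 | h1
      · have hbc : bstar ≤ c := by
          rw [hbs]
          exact le_trans (min_le_right _ _) (by rw [max_eq_right h1])
        exact lt_of_lt_of_le hx.2 hbc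
      · exfalso
        have : bstar = 0 := by
          rw [hbs, max_eq_left h1.le, min_eq_right hB.le]
        rw [this] at hx
        exact absurd (hx.1.trans hx.2) (lt_irrefl 0)
    have := hEneg x hcx
    nlinarith
  have h0b : 0 ≤ bstar := by
    rw [hbs]; exact le_min hB.le (le_max_left 0 c)
  have hbB : bstar ≤ B := min_le_left _ _
  have hstrict : ∀ b ∈ Set.Icc 0 B, b ≠ bstar → f bstar < f b := by
    intro b hb hne
    rcases lt_or_gt_of_ne hne with hlt | hgt
    · exact hanti ⟨hb.1, hlt.le⟩ ⟨h0b, le_refl _⟩ hlt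
    · exact hmono ⟨le_refl _, hbB⟩ ⟨hgt.le, hb.2⟩ hgt
  refine ⟨⟨h0b, hbB⟩, ?_, hstrict⟩
  intro b hb
  rcases eq_or_ne b bstar with h | h
  · rw [h]
  · exact (hstrict b hb h).le
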